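/- Let ε ≠ 0, γ > 0, and define H(x) = ½[x(x + √(x² − ε²))/ε² − ln(x + √(x² − ε²))] for x ≥ |ε|. Let E : I → ℝ be differentiable on an open interval I with E(t) > |ε| and E′(t) = −γ(E(t) − √(E(t)² − ε²)) for all t ∈ I. Then d/dt H(E(t)) = −γ for all t ∈ I; equivalently, H(E(t)) = H(E(t₀)) − γ(t − t₀) for all t, t₀ ∈ I. -/

import Mathlib

/-- The function `H(x) = ½[x(x + √(x² − ε²))/ε² − ln(x + √(x² − ε²))]`. -/
noncomputable def Hfun (ε x : ℝ) : ℝ :=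
  (1 / 2) * (x * (x + Real.sqrt (x ^ 2 - ε ^ 2)) / ε ^ 2
    - Real.log (x + Real.sqrt (x ^ 2 - ε ^ 2)))

lemma Hfun_hasDerivAt (ε x : ℝ) (hε : ε ≠ 0) (hx : |ε| < x) :
    HasDerivAt (Hfun ε) ((x + Real.sqrt (x ^ 2 - ε ^ 2)) / ε ^ 2) x := by
  have habs : (0:ℝ) ≤ |ε| := abs_nonneg ε
  have hx2 : 0 < x ^ 2 - ε ^ 2 := by nlinarith [sq_abs ε]
  set u := Real.sqrt (x ^ 2 - ε ^ 2) with hudef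
  have hu : 0 < u := Real.sqrt_pos.2 hx2
  have hu2 : u ^ 2 = x ^ 2 - ε ^ 2 := Real.sq_sqrt hx2.le
  have hxu : 0 < x + u := by nlinarith
  have hsq : HasDerivAt (fun y : ℝ => Real.sqrt (y ^ 2 - ε ^ 2)) (x / u) x := by
    have h1 : HasDerivAt (fun y : ℝ => y ^ 2 - ε ^ 2) (2 * x) x := by
      simpa using (hasDerivAt_pow 2 x).sub_const (ε ^ 2)
    have h2 := (Real.hasDerivAt_sqrt (ne_of_gt hx2)).comp x h1
    refine h2.congr_deriv ?_
    rw [← hudef]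
    field_simp
  have hin : HasDerivAt (fun y : ℝ => y + Real.sqrt (y ^ 2 - ε ^ 2)) (1 + x / u) x :=
    (hasDerivAt_id x).add hsq
  have hmul : HasDerivAt (fun y : ℝ => y * (y + Real.sqrt (y ^ 2 - ε ^ 2)))
      (1 * (x + u) + x * (1 + x / u)) x := (hasDerivAt_id x).mul hin
  have hlog : HasDerivAt (fun y : ℝ => Real.log (y + Real.sqrt (y ^ 2 - ε ^ 2)))
      ((1 + x / u) / (x + u)) x := by
    have := (Real.hasDerivAt_log (ne_of_gt hxu)).comp x hin
    exact this.congr_deriv (by ring)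
  have hfull : HasDerivAt (Hfun ε)
      ((1 / 2) * ((1 * (x + u) + x * (1 + x / u)) / ε ^ 2 - (1 + x / u) / (x + u))) x := by
    exact ((hmul.div_const (ε ^ 2)).sub hlog).const_mul (1 / 2)
  convert hfull using 1
  have hune : u ≠ 0 := ne_of_gt hu
  have hxune : x + u ≠ 0 := ne_of_gt hxu
  have heps : ε ^ 2 = x ^ 2 - u ^ 2 := by linarith
  have hne2 : x ^ 2 - u ^ 2 ≠ 0 := by rw [← heps]; positivity
  rw [heps]
  field_simp
  ring

/-- Along solutions of `E′ = −γ(E − √(E² − ε²))` with `E > |ε|`, one has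
`d/dt H(E(t)) = −γ`; equivalently `H(E(t)) = H(E(t₀)) − γ(t − t₀)`. -/
theorem stmt_18 (ε γ a b : ℝ) (hε : ε ≠ 0) (hγ : 0 < γ) (E : ℝ → ℝ)
    (hE : ∀ t ∈ Set.Ioo a b, |ε| < E t)
    (hE' : ∀ t ∈ Set.Ioo a b,
      HasDerivAt E (-(γ * (E t - Real.sqrt ((E t) ^ 2 - ε ^ 2)))) t) :
    (∀ t ∈ Set.Ioo a b, HasDerivAt (fun s => Hfun ε (E s)) (-γ) t) ∧
    (∀ t ∈ Set.Ioo a b, ∀ t₀ ∈ Set.Ioo a b,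
      Hfun ε (E t) = Hfun ε (E t₀) - γ * (t - t₀)) := by
  have key : ∀ t ∈ Set.Ioo a b, HasDerivAt (fun s => Hfun ε (E s)) (-γ) t := by
    intro t ht
    have hEt := hE t ht
    have hx2 : 0 < (E t) ^ 2 - ε ^ 2 := by nlinarith [abs_nonneg ε, sq_abs ε]
    set u := Real.sqrt ((E t) ^ 2 - ε ^ 2) with hudef
    have hu2 : u ^ 2 = (E t) ^ 2 - ε ^ 2 := Real.sq_sqrt hx2.le
    have h := (Hfun_hasDerivAt ε (E t) hε hEt).comp t (hE' t ht)
    refine h.congr_deriv ?_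
    rw [← hudef]
    have heps : ε ^ 2 = (E t) ^ 2 - u ^ 2 := by linarith
    have hne2 : (E t) ^ 2 - u ^ 2 ≠ 0 := by rw [← heps]; positivity
    rw [heps]
    field_simp
    ring
  refine ⟨key, ?_⟩
  have main : ∀ t t₀, t ∈ Set.Ioo a b → t₀ ∈ Set.Ioo a b → t₀ < t →
      Hfun ε (E t) = Hfun ε (E t₀) - γ * (t - t₀) := by
    intro t t₀ ht ht₀ hlt
    have hsub : Set.Icc t₀ t ⊆ Set.Ioo a b := by
      intro x hx
      exact ⟨lt_of_lt_of_le ht₀.1 hx.1, lt_of_le_of_lt hx.2 ht.2⟩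
    set g : ℝ → ℝ := fun s => Hfun ε (E s) + γ * s with hg
    have hg' : ∀ x ∈ Set.Ioo t₀ t, HasDerivAt g 0 x := by
      intro x hx
      have := (key x (hsub ⟨hx.1.le, hx.2.le⟩)).add ((hasDerivAt_id x).const_mul γ)
      exact this.congr_deriv (by ring)
    have hcont : ContinuousOn g (Set.Icc t₀ t) := by
      intro x hx
      by_cases hx' : x ∈ Set.Ioo a b
      · exact ((key x hx').add ((hasDerivAt_id x).const_mul γ)).continuousAt.continuousWithinAt
      · exact absurd (hsub hx) hx'
    obtain ⟨c, hc, hceq⟩ := exists_hasDerivAt_eq_slope g (fun _ => (0:ℝ)) hlt hcont hg'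
    have : (g t - g t₀) / (t - t₀) = 0 := hceq.symm
    have hne : t - t₀ ≠ 0 := by linarith
    have hgt : g t = g t₀ := by
      field_simp at this
      linarith [this]
    simp only [hg] at hgt
    linarith [hgt]
  intro t ht t₀ ht₀
  rcases lt_trichotomy t t₀ with h | h | h
  · have := main t₀ t ht₀ ht h
    linarith
  · subst h; ring_nf
  · have := main t t₀ ht ht₀ h
    linarith
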